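/- arXiv:1609.06854 — 3 statements merged into one kernel-verified Lean document; each statement's English description precedes it below -/
import Mathlib

section
/- Suppose {V_{m,n}} is a family of real polynomial functions indexed by (m,n) ∈ ℕ², with V_{0,0} = 1, such that for (m,n) ≠ (0,0), V_{m,n} is a polynomial vanishing at 0 satisfying (1/2)V''_{m,n}(x) - μV'_{m,n}(x) = -mV_{m-1,n}(x) - nxV_{m,n-1}(x) (with the convention that terms with negative index are absent). Then for all (m,n) ≠ (0,0), the degree of V_{m,n} equals m + 2n. -/
open Polynomial

private lemma natDeg_lc_aux (q : Polynomial ℝ) (d : ℕ) (h1 : q.natDegree ≤ d)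
    (h2 : q.coeff d ≠ 0) : q.natDegree = d ∧ q.leadingCoeff = q.coeff d := by
  have hd : q.natDegree = d := le_antisymm h1 (le_natDegree_of_ne_zero h2)
  exact ⟨hd, by rw [leadingCoeff, hd]⟩

private lemma step_aux (μ : ℝ) (hμ : 0 < μ) (p q : Polynomial ℝ)
    (heq : C μ * p.derivative - C (1/2 : ℝ) * p.derivative.derivative = q)
    (d : ℕ) (hqd : q.natDegree = d) (hqlc : 0 < q.leadingCoeff) :
    p.natDegree = d + 1 ∧ 0 < p.leadingCoeff := by
  have hq0 : q ≠ 0 := fun h => by simp [h] at hqlc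
  have hp1 : 1 ≤ p.natDegree := by
    by_contra hcon
    push_neg at hcon
    have h0 : p.natDegree = 0 := by omega
    have hd : p.derivative = 0 := by
      rw [Polynomial.eq_C_of_natDegree_eq_zero h0]; simp
    rw [hd] at heq
    simp at heq
    exact hq0 heq.symm
  have hp0 : p ≠ 0 := fun h => by simp [h] at hp1
  set D := p.natDegree - 1 with hD
  have hD1 : D + 1 = p.natDegree := by omega
  have hc2 : p.coeff (D + 2) = 0 := coeff_eq_zero_of_natDegree_lt (by omega)
  have hc : q.coeff D = μ * (p.natDegree : ℝ) * p.leadingCoeff := by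
    rw [← heq]
    simp only [coeff_sub, coeff_C_mul, coeff_derivative, hc2, zero_mul, mul_zero, sub_zero]
    rw [Polynomial.leadingCoeff, ← hD1]
    push_cast
    ring
  have hlcp : p.leadingCoeff ≠ 0 := leadingCoeff_ne_zero.mpr hp0
  have hcne : q.coeff D ≠ 0 := by
    rw [hc]
    have hne : (p.natDegree : ℝ) ≠ 0 := Nat.cast_ne_zero.mpr (by omega)
    positivity
  have hble : q.natDegree ≤ D := by
    rw [← heq]
    refine (natDegree_sub_le _ _).trans (max_le ?_ ?_)
    · exact (natDegree_C_mul_le _ _).trans ((natDegree_derivative_le p).trans (by omega))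
    · refine (natDegree_C_mul_le _ _).trans ?_
      exact (natDegree_derivative_le _).trans
        (le_trans (Nat.sub_le_sub_right (natDegree_derivative_le p) 1) (by omega))
  obtain ⟨hqD, hqlc'⟩ := natDeg_lc_aux q D hble hcne
  refine ⟨by omega, ?_⟩
  rw [hqlc', hc] at hqlc
  have hnd : (0 : ℝ) < (p.natDegree : ℝ) := by exact_mod_cast (show 0 < p.natDegree by omega)
  by_contra hle
  push_neg at hle
  nlinarith [mul_pos hμ hnd, hqlc]

-- degree/leadingCoeff of C c * A
private lemma lc1_aux (c : ℝ) (hc : 0 < c) (A : Polynomial ℝ) (d : ℕ)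
    (hA : A.natDegree = d) (hAlc : 0 < A.leadingCoeff) :
    (C c * A).natDegree = d ∧ 0 < (C c * A).leadingCoeff := by
  constructor
  · rw [natDegree_C_mul hc.ne', hA]
  · rw [leadingCoeff_mul, leadingCoeff_C]
    positivity

-- degree/leadingCoeff of C c * X * B
private lemma lc2_aux (c : ℝ) (hc : 0 < c) (B : Polynomial ℝ) (d : ℕ)
    (hB : B.natDegree = d) (hBlc : 0 < B.leadingCoeff) :
    (C c * X * B).natDegree = d + 1 ∧ 0 < (C c * X * B).leadingCoeff := by
  have hB0 : B ≠ 0 := leadingCoeff_ne_zero.mp hBlc.ne'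
  have hCX : (C c * X : Polynomial ℝ) ≠ 0 := by
    intro h
    have := leadingCoeff_C_mul_X c
    rw [h] at this
    simp at this
    exact hc.ne' this.symm
  constructor
  · rw [natDegree_mul hCX hB0, natDegree_C_mul hc.ne', natDegree_X, hB, add_comm]
  · rw [leadingCoeff_mul, leadingCoeff_C_mul_X]
    positivity

-- degree/leadingCoeff of C c1 * A + C c2 * X * B when deg A = deg B + 1
private lemma lc3_aux (c1 c2 : ℝ) (hc1 : 0 < c1) (hc2 : 0 < c2) (A B : Polynomial ℝ) (d : ℕ)
    (hA : A.natDegree = d + 1) (hAlc : 0 < A.leadingCoeff)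
    (hB : B.natDegree = d) (hBlc : 0 < B.leadingCoeff) :
    (C c1 * A + C c2 * X * B).natDegree = d + 1 ∧
      0 < (C c1 * A + C c2 * X * B).leadingCoeff := by
  have hcoeff : (C c1 * A + C c2 * X * B).coeff (d + 1)
      = c1 * A.leadingCoeff + c2 * B.leadingCoeff := by
    rw [coeff_add, coeff_C_mul, mul_assoc, coeff_C_mul, coeff_X_mul]
    rw [Polynomial.leadingCoeff, Polynomial.leadingCoeff, hA, hB]
  have hpos : 0 < c1 * A.leadingCoeff + c2 * B.leadingCoeff := by positivity
  have hle : (C c1 * A + C c2 * X * B).natDegree ≤ d + 1 := by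
    refine (natDegree_add_le _ _).trans (max_le ?_ ?_)
    · exact (natDegree_C_mul_le _ _).trans hA.le
    · refine natDegree_mul_le.trans ?_
      have h1 : (C c2 * X : Polynomial ℝ).natDegree ≤ 1 :=
        natDegree_mul_le.trans (by simp)
      omega
  obtain ⟨h1, h2⟩ := natDeg_lc_aux _ (d + 1) hle (by rw [hcoeff]; exact hpos.ne')
  exact ⟨h1, by rw [h2, hcoeff]; exact hpos⟩

theorem stmt_10 (μ : ℝ) (hμ : 0 < μ)
    (V : ℕ → ℕ → Polynomial ℝ)
    (h00 : V 0 0 = 1)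
    (hODE : ∀ m n : ℕ, (m, n) ≠ (0, 0) →
      Polynomial.eval 0 (V m n) = 0 ∧
      ∀ x : ℝ, (1 / 2) * Polynomial.eval x (V m n).derivative.derivative
          - μ * Polynomial.eval x (V m n).derivative
        = -(m : ℝ) * Polynomial.eval x (V (m - 1) n)
          - (n : ℝ) * x * Polynomial.eval x (V m (n - 1))) :
    ∀ m n : ℕ, (m, n) ≠ (0, 0) → (V m n).natDegree = m + 2 * n := by
  suffices H : ∀ k m n : ℕ, m + n = k → (m, n) ≠ (0, 0) →
      (V m n).natDegree = m + 2 * n ∧ 0 < (V m n).leadingCoeff by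
    exact fun m n h => (H (m + n) m n rfl h).1
  intro k
  induction k using Nat.strong_induction_on with
  | _ k IH =>
    intro m n hk h
    have IH' : ∀ a b : ℕ, a + b < k →
        (V a b).natDegree = a + 2 * b ∧ 0 < (V a b).leadingCoeff := by
      intro a b hab
      by_cases hab0 : (a, b) = (0, 0)
      · rw [Prod.mk.injEq] at hab0
        obtain ⟨rfl, rfl⟩ := hab0
        rw [h00]
        exact ⟨by simp, by rw [leadingCoeff_one]; norm_num⟩
      · exact IH (a + b) hab a b rfl hab0
    have hpoly : C μ * (V m n).derivative - C (1/2 : ℝ) * (V m n).derivative.derivative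
        = C (m : ℝ) * V (m - 1) n + C (n : ℝ) * X * V m (n - 1) := by
      apply Polynomial.funext
      intro x
      have h2 := (hODE m n h).2 x
      simp only [eval_sub, eval_add, eval_mul, eval_C, eval_X]
      linarith [h2]
    rcases m with _ | m <;> rcases n with _ | n
    · exact absurd rfl h
    · -- m = 0, n = succ n
      obtain ⟨hB, hBlc⟩ := IH' 0 n (by omega)
      rw [show ((0 : ℕ) : ℝ) = 0 by norm_num, map_zero, zero_mul, zero_add,
        Nat.add_sub_cancel] at hpoly
      have hq := lc2_aux ((n : ℝ) + 1) (by positivity) (V 0 n) (2 * n)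
        (by omega) hBlc
      rw [show ((n : ℕ) + 1 : ℕ) = n + 1 from rfl] at hpoly
      have hcast : ((n + 1 : ℕ) : ℝ) = (n : ℝ) + 1 := by push_cast; ring
      rw [hcast] at hpoly
      have := step_aux μ hμ (V 0 (n + 1)) _ hpoly _ hq.1 hq.2
      exact ⟨by omega, this.2⟩
    · -- m = succ m, n = 0
      obtain ⟨hA, hAlc⟩ := IH' m 0 (by omega)
      rw [show ((0 : ℕ) : ℝ) = 0 by norm_num, map_zero, zero_mul, zero_mul, add_zero,
        Nat.add_sub_cancel] at hpoly
      have hcast : ((m + 1 : ℕ) : ℝ) = (m : ℝ) + 1 := by push_cast; ring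
      rw [hcast] at hpoly
      have hq := lc1_aux ((m : ℝ) + 1) (by positivity) (V m 0) m (by omega) hAlc
      have := step_aux μ hμ (V (m + 1) 0) _ hpoly _ hq.1 hq.2
      exact ⟨by omega, this.2⟩
    · -- m = succ m, n = succ n
      obtain ⟨hA, hAlc⟩ := IH' m (n + 1) (by omega)
      obtain ⟨hB, hBlc⟩ := IH' (m + 1) n (by omega)
      rw [Nat.add_sub_cancel, Nat.add_sub_cancel] at hpoly
      have hcast1 : ((m + 1 : ℕ) : ℝ) = (m : ℝ) + 1 := by push_cast; ring
      have hcast2 : ((n + 1 : ℕ) : ℝ) = (n : ℝ) + 1 := by push_cast; ring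
      rw [hcast1, hcast2] at hpoly
      have hq := lc3_aux ((m : ℝ) + 1) ((n : ℝ) + 1) (by positivity) (by positivity)
        (V m (n + 1)) (V (m + 1) n) (m + 2 * n + 1) (by omega) hAlc (by omega) hBlc
      have := step_aux μ hμ (V (m + 1) (n + 1)) _ hpoly _ hq.1 hq.2
      exact ⟨by omega, this.2⟩
end

section
/- For μ > 0 and x > 0, ∫₀^∞ e^{μx} e^{-x√(μ²+2λ)} [x/(2(μ²+2λ)) + x²/(2√(μ²+2λ))] dλ = (x/2)[1 + ∫₀^∞ e^{-sx}/(s+μ) ds]. -/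
open MeasureTheory

theorem stmt_14 (μ x : ℝ) (hμ : 0 < μ) (hx : 0 < x) :
    ∫ lam in Set.Ioi (0 : ℝ),
      Real.exp (μ * x) * Real.exp (-x * Real.sqrt (μ ^ 2 + 2 * lam)) *
        (x / (2 * (μ ^ 2 + 2 * lam)) + x ^ 2 / (2 * Real.sqrt (μ ^ 2 + 2 * lam)))
      = (x / 2) * (1 + ∫ s in Set.Ioi (0 : ℝ), Real.exp (-s * x) / (s + μ)) := by
  set f : ℝ → ℝ := fun s => ((s + μ) ^ 2 - μ ^ 2) / 2 with hf
  have himg : f '' Set.Ioi 0 = Set.Ioi 0 := by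
    ext y
    simp only [Set.mem_image, Set.mem_Ioi]
    constructor
    · rintro ⟨s, hs, rfl⟩
      simp only [hf]
      nlinarith
    · intro hy
      refine ⟨Real.sqrt (μ ^ 2 + 2 * y) - μ, ?_, ?_⟩
      · have h1 : μ ^ 2 < μ ^ 2 + 2 * y := by linarith
        have h2 : Real.sqrt (μ ^ 2) < Real.sqrt (μ ^ 2 + 2 * y) :=
          Real.sqrt_lt_sqrt (by positivity) h1
        rw [Real.sqrt_sq hμ.le] at h2
        linarith
      · have h3 : Real.sqrt (μ ^ 2 + 2 * y) ^ 2 = μ ^ 2 + 2 * y :=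
          Real.sq_sqrt (by positivity)
        simp only [hf]
        nlinarith
  have hderiv : ∀ s ∈ Set.Ioi (0 : ℝ), HasDerivWithinAt f (s + μ) (Set.Ioi 0) s := by
    intro s _
    have h : HasDerivAt f (s + μ) s := by
      have h := ((((hasDerivAt_id s).add_const μ).pow 2).sub_const (μ ^ 2)).div_const 2
      exact h.congr_deriv (by norm_num)
    exact h.hasDerivWithinAt
  have hinj : Set.InjOn f (Set.Ioi 0) := by
    intro a ha b hb hab
    simp only [hf] at hab
    simp only [Set.mem_Ioi] at ha hb
    by_contra h
    rcases lt_or_gt_of_ne h with h' | h' <;> nlinarith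
  conv_lhs => rw [← himg]
  rw [integral_image_eq_integral_abs_deriv_smul measurableSet_Ioi hderiv hinj]
  have key : Set.EqOn
      (fun s => |s + μ| • (Real.exp (μ * x) * Real.exp (-x * Real.sqrt (μ ^ 2 + 2 * f s)) *
        (x / (2 * (μ ^ 2 + 2 * f s)) + x ^ 2 / (2 * Real.sqrt (μ ^ 2 + 2 * f s)))))
      (fun s => (x / 2) * (Real.exp (-s * x) / (s + μ)) + (x / 2) * (x * Real.exp (-s * x)))
      (Set.Ioi 0) := by
    intro s hs
    simp only [Set.mem_Ioi] at hs
    have hsμ : 0 < s + μ := by linarith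
    have h1 : μ ^ 2 + 2 * f s = (s + μ) ^ 2 := by simp only [hf]; ring
    have h2 : Real.sqrt (μ ^ 2 + 2 * f s) = s + μ := by
      rw [h1, Real.sqrt_sq hsμ.le]
    have h2' : Real.sqrt ((s + μ) ^ 2) = s + μ := Real.sqrt_sq hsμ.le
    simp only [h1, h2', smul_eq_mul, abs_of_pos hsμ]
    have h3 : Real.exp (μ * x) * Real.exp (-x * (s + μ)) = Real.exp (-s * x) := by
      rw [← Real.exp_add]; ring_nf
    rw [h3]
    field_simp
  rw [setIntegral_congr_fun measurableSet_Ioi key]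
  have hint1 : IntegrableOn (fun s => Real.exp (-s * x) / (s + μ)) (Set.Ioi (0 : ℝ)) := by
    have hbound : IntegrableOn (fun s => Real.exp (-x * s) / μ) (Set.Ioi (0 : ℝ)) :=
      (exp_neg_integrableOn_Ioi 0 hx).div_const μ
    refine MeasureTheory.Integrable.mono' hbound ?_ ?_
    · apply ContinuousOn.aestronglyMeasurable ?_ measurableSet_Ioi
      apply ContinuousOn.div
      · exact (Real.continuous_exp.comp (continuous_neg.mul continuous_const)).continuousOn
      · exact (continuous_id.add continuous_const).continuousOn
      · intro s hs; simp only [Set.mem_Ioi] at hs; positivity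
    · filter_upwards [ae_restrict_mem measurableSet_Ioi] with s hs
      simp only [Set.mem_Ioi] at hs
      have hsμ : 0 < s + μ := by linarith
      rw [Real.norm_eq_abs, abs_of_pos (by positivity),
        show -x * s = -s * x by ring]
      gcongr
      linarith
  have hint2 : IntegrableOn (fun s => x * Real.exp (-s * x)) (Set.Ioi (0 : ℝ)) := by
    have h := (exp_neg_integrableOn_Ioi 0 hx).const_mul x
    simpa [mul_comm, IntegrableOn] using h
  have hexp : ∫ s in Set.Ioi (0 : ℝ), Real.exp (-s * x) = x⁻¹ := by
    have := integral_comp_mul_right_Ioi (fun t => Real.exp (-t)) 0 hx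
    simp only [zero_mul, smul_eq_mul, neg_mul] at this ⊢
    rw [this, integral_exp_neg_Ioi_zero, mul_one]
  rw [integral_add (hint1.const_mul _) (hint2.const_mul _), integral_const_mul,
    integral_const_mul, integral_const_mul, hexp]
  field_simp
  ring
end

section
/- For c > 0, ∫₀^∞ (2^{1/3}/(3^{2/3}Γ(1/3))) · (x/a^{4/3}) · e^{-2x³/(9a)} da = 1 for every x > 0, i.e., the function a ↦ (2^{1/3}/(3^{2/3}Γ(1/3))) x a^{-4/3} e^{-2x³/(9a)} is a probability density on (0,∞); moreover ∫₀^∞ a · f(a) da = +∞. -/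
open MeasureTheory Real

open Set in
lemma aux_norm (x : ℝ) (hx : 0 < x) :
    (∫ a in Set.Ioi (0 : ℝ),
      (2 ^ ((1 : ℝ) / 3) / (3 ^ ((2 : ℝ) / 3) * Real.Gamma (1 / 3))) *
      (x / a ^ ((4 : ℝ) / 3)) * Real.exp (-2 * x ^ 3 / (9 * a))) = 1 := by
  set C : ℝ := 2 ^ ((1 : ℝ) / 3) / (3 ^ ((2 : ℝ) / 3) * Real.Gamma (1 / 3)) with hC
  set k : ℝ := 2 * x ^ 3 / 9 with hk
  have hkpos : 0 < k := by positivity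
  have step1 : (∫ a in Set.Ioi (0 : ℝ),
      C * (x / a ^ ((4 : ℝ) / 3)) * Real.exp (-2 * x ^ 3 / (9 * a)))
      = ∫ s in Set.Ioi (0 : ℝ), C * x * (s ^ ((1:ℝ)/3 - 1) * Real.exp (-(k * s))) := by
    rw [← integral_comp_rpow_Ioi (fun a => C * (x / a ^ ((4 : ℝ) / 3)) * Real.exp (-2 * x ^ 3 / (9 * a))) (p := -1) (by norm_num)]
    refine setIntegral_congr_fun measurableSet_Ioi (fun s hs => ?_)
    have hs' : (0:ℝ) < s := hs
    have h2 : ((s:ℝ) ^ (-1:ℝ)) ^ ((4:ℝ)/3) = s ^ (-(4:ℝ)/3) := by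
      rw [← Real.rpow_mul hs'.le]; norm_num
    have h3 : -2 * x ^ 3 / (9 * s ^ (-1:ℝ)) = -(k * s) := by
      rw [Real.rpow_neg_one]
      field_simp [hk]; rw [hk]; ring
    have h6 : s ^ ((-1:ℝ) - 1) * s ^ ((4:ℝ)/3) = s ^ ((1:ℝ)/3 - 1) := by
      rw [← Real.rpow_add hs']; norm_num
    have h7 : x / s ^ (-(4:ℝ)/3) = x * s ^ ((4:ℝ)/3) := by
      rw [neg_div, Real.rpow_neg hs'.le, div_inv_eq_mul]
    simp only [smul_eq_mul, h2, h3, h7, abs_neg, abs_one, one_mul]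
    rw [← h6]; ring
  rw [step1, integral_const_mul, integral_rpow_mul_exp_neg_mul_Ioi (by norm_num) hkpos]
  have hG : 0 < Real.Gamma (1/3 : ℝ) := Real.Gamma_pos_of_pos (by norm_num)
  have h8 : ((1:ℝ)/k) ^ ((1:ℝ)/3) = 3 ^ ((2:ℝ)/3) / (2 ^ ((1:ℝ)/3) * x) := by
    rw [hk]
    rw [show (1:ℝ) / (2 * x ^ 3 / 9) = 9 / (2 * x ^ 3) by field_simp]
    rw [Real.div_rpow (by norm_num) (by positivity), Real.mul_rpow (by norm_num) (by positivity)]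
    congr 1
    · rw [show (9:ℝ) = 3 ^ (2:ℝ) by norm_num [← Real.rpow_natCast 3 2], ← Real.rpow_mul (by norm_num)]
      norm_num
    · congr 1
      rw [← Real.rpow_natCast x 3, ← Real.rpow_mul hx.le]
      norm_num
  rw [h8, hC]
  field_simp

open Set in
lemma aux_moment (x : ℝ) (hx : 0 < x) (f : ℝ → ℝ)
    (hf : f = fun a => (2 ^ ((1 : ℝ) / 3) / (3 ^ ((2 : ℝ) / 3) * Real.Gamma (1 / 3))) *
      (x / a ^ ((4 : ℝ) / 3)) * Real.exp (-2 * x ^ 3 / (9 * a))) :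
    (∫⁻ a in Set.Ioi (0 : ℝ), ENNReal.ofReal (a * f a)) = ⊤ := by
  set C : ℝ := 2 ^ ((1 : ℝ) / 3) / (3 ^ ((2 : ℝ) / 3) * Real.Gamma (1 / 3)) with hC
  have hG : 0 < Real.Gamma (1/3 : ℝ) := Real.Gamma_pos_of_pos (by norm_num)
  have hCpos : 0 < C := by rw [hC]; positivity
  set k : ℝ := 2 * x ^ 3 / 9 with hk
  have hkpos : 0 < k := by positivity
  set M : ℝ := max 1 k with hM
  have hM0 : (0:ℝ) < M := lt_of_lt_of_le one_pos (le_max_left _ _)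
  set c : ℝ := C * x * Real.exp (-1) with hc
  have hcpos : 0 < c := by positivity
  -- key: lintegral of c * a^(-1/3) on Ioi M is top
  have key : (∫⁻ a in Set.Ioi M, ENNReal.ofReal (c * a ^ (-(1:ℝ)/3))) = ⊤ := by
    by_contra h
    have hmeas : AEStronglyMeasurable (fun a : ℝ => c * a ^ (-(1:ℝ)/3))
        (volume.restrict (Ioi M)) :=
      ((measurable_id.pow_const _).const_mul c).aestronglyMeasurable
    have hnn : 0 ≤ᵐ[volume.restrict (Ioi M)] fun a : ℝ => c * a ^ (-(1:ℝ)/3) := by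
      filter_upwards [ae_restrict_mem measurableSet_Ioi] with a ha
      have : (0:ℝ) < a := lt_trans hM0 ha
      positivity
    have hint : IntegrableOn (fun a : ℝ => c * a ^ (-(1:ℝ)/3)) (Ioi M) := by
      refine ⟨hmeas, ?_⟩
      rw [hasFiniteIntegral_iff_ofReal hnn]
      exact lt_top_iff_ne_top.mpr h
    have hint2 : IntegrableOn (fun a : ℝ => a ^ (-(1:ℝ)/3)) (Ioi M) := by
      have := hint.const_mul c⁻¹
      simpa [IntegrableOn, ← mul_assoc, inv_mul_cancel₀ hcpos.ne'] using this
    rw [integrableOn_Ioi_rpow_iff hM0] at hint2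
    norm_num at hint2
  refine top_le_iff.mp ?_
  rw [← key]
  refine le_trans ?_ (lintegral_mono_set (Ioi_subset_Ioi hM0.le))
  refine setLIntegral_mono' measurableSet_Ioi (fun a ha => ?_)
  apply ENNReal.ofReal_le_ofReal
  have ha' : M < a := ha
  have ha0 : (0:ℝ) < a := lt_trans hM0 ha'
  have hpow : a ^ (-(1:ℝ)/3) = a / a ^ ((4:ℝ)/3) := by
    rw [show (-(1:ℝ)/3) = 1 - 4/3 by norm_num, Real.rpow_sub ha0, Real.rpow_one]
  have hexp : Real.exp (-1) ≤ Real.exp (-2 * x ^ 3 / (9 * a)) := by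
    apply Real.exp_le_exp.mpr
    have hka : k ≤ a := le_of_lt (lt_of_le_of_lt (le_max_right 1 k) ha')
    have h1 : 2 * x ^ 3 / (9 * a) ≤ 1 := by
      rw [div_le_one (by positivity)]
      rw [hk] at hka
      linarith
    have h2 : -2 * x ^ 3 / (9 * a) = -(2 * x ^ 3 / (9 * a)) := by ring
    rw [h2]; linarith
  rw [hf]
  simp only
  have hnn : 0 ≤ C * x * (a / a ^ ((4:ℝ)/3)) := by positivity
  calc c * a ^ (-(1:ℝ)/3) = C * x * (a / a ^ ((4:ℝ)/3)) * Real.exp (-1) := by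
        rw [hc, hpow]; ring
    _ ≤ C * x * (a / a ^ ((4:ℝ)/3)) * Real.exp (-2 * x ^ 3 / (9 * a)) :=
        mul_le_mul_of_nonneg_left hexp hnn
    _ = a * (C * (x / a ^ ((4:ℝ)/3)) * Real.exp (-2 * x ^ 3 / (9 * a))) := by ring

theorem stmt_18 (x : ℝ) (hx : 0 < x)
    (f : ℝ → ℝ)
    (hf : f = fun a => (2 ^ ((1 : ℝ) / 3) / (3 ^ ((2 : ℝ) / 3) * Real.Gamma (1 / 3))) *
      (x / a ^ ((4 : ℝ) / 3)) * Real.exp (-2 * x ^ 3 / (9 * a))) :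
    (∫ a in Set.Ioi (0 : ℝ), f a) = 1 ∧
    (∫⁻ a in Set.Ioi (0 : ℝ), ENNReal.ofReal (a * f a)) = ⊤ :=
  ⟨by rw [hf]; exact aux_norm x hx, aux_moment x hx f hf⟩
end
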